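/- Let $A_p$ be a positive sequence with $A_0=A_1=1$ satisfying (M.4) (i.e., $A_p/p!$ is log-convex). Then $p\,A_{p-1}\le A_p$ for all $p\in\mathbb{Z}_+$, and for multi-indices: if $\beta+\gamma+\delta=\alpha$ in $\mathbb{N}^{2d}$, $l\ge 1$, $j\ge l$, and $|\beta|+|\gamma|+l\ge 1$, $|\delta|+2j-l\ge 1$, then $\frac{|\alpha|!}{|\beta|!|\gamma|!|\delta|!} A_{|\beta|}A_{|\gamma|+l}A_{|\delta|+2j-l} \le (|\alpha|+2j)\, A_{|\alpha|+2j-1}$. -/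

import Mathlib

open Finset

section Aux

variable (N : ℕ → ℝ) (hN : ∀ p, 0 < N p)
  (hstep : ∀ p : ℕ, N (p+1) * N (p+1) ≤ N p * N (p+2))

include hN hstep

lemma aux_ratio_mono : ∀ a b : ℕ, a ≤ b → N (a+1) * N b ≤ N a * N (b+1) := by
  intro a b hab
  induction b, hab using Nat.le_induction with
  | base => rw [mul_comm]
  | succ b hb IH =>
    have hs := hstep b
    have h3 : N (a+1) * N (b+1) * N b ≤ N a * N (b+2) * N b := by
      nlinarith [mul_le_mul_of_nonneg_right IH (hN (b+1)).le,
        mul_le_mul_of_nonneg_left hs (hN a).le, (hN a).le, (hN (a+1)).le,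
        (hN b).le, (hN (b+1)).le, (hN (b+2)).le]
    exact le_of_mul_le_mul_right h3 (hN b)

lemma aux_spread0 : ∀ a b : ℕ, a ≤ b → N a * N b ≤ N 0 * N (a + b) := by
  intro a
  induction a with
  | zero => intro b _; simp
  | succ a IH =>
    intro b hab
    have h1 : N (a+1) * N b ≤ N a * N (b+1) :=
      aux_ratio_mono N hN hstep a b (Nat.le_of_succ_le hab)
    have h2 : N a * N (b+1) ≤ N 0 * N (a + (b+1)) := IH (b+1) (by omega)
    have : a + (b+1) = a + 1 + b := by omega
    rw [this] at h2
    linarith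

lemma aux_spread1 : ∀ a b : ℕ, a + 1 ≤ b → N (a+1) * N b ≤ N 1 * N (a + b) := by
  intro a
  induction a with
  | zero => intro b _; simp
  | succ a IH =>
    intro b hab
    have h1 : N (a+2) * N b ≤ N (a+1) * N (b+1) :=
      aux_ratio_mono N hN hstep (a+1) b (by omega)
    have h2 : N (a+1) * N (b+1) ≤ N 1 * N (a + (b+1)) := IH (b+1) (by omega)
    have : a + (b+1) = a + 1 + b := by omega
    rw [this] at h2
    linarith

lemma aux_spread0' (x y : ℕ) : N x * N y ≤ N 0 * N (x + y) := by
  rcases le_total x y with h | h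
  · exact aux_spread0 N hN hstep x y h
  · have := aux_spread0 N hN hstep y x h
    rw [mul_comm (N x)]; rwa [Nat.add_comm y x] at this

lemma aux_spread1' (x y : ℕ) (hx : 1 ≤ x) (hy : 1 ≤ y) :
    N x * N y ≤ N 1 * N (x + y - 1) := by
  rcases le_total x y with h | h
  · obtain ⟨a, rfl⟩ : ∃ a, x = a + 1 := ⟨x - 1, by omega⟩
    have := aux_spread1 N hN hstep a y (by omega)
    have he : a + 1 + y - 1 = a + y := by omega
    rwa [he]
  · obtain ⟨a, rfl⟩ : ∃ a, y = a + 1 := ⟨y - 1, by omega⟩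
    have := aux_spread1 N hN hstep a x (by omega)
    have he : x + (a + 1) - 1 = a + x := by omega
    rw [he, mul_comm (N x)]
    exact this

end Aux

lemma aux_factle : ∀ (k g a : ℕ), g ≤ a →
    a.factorial * (g + k).factorial ≤ g.factorial * (a + k).factorial := by
  intro k
  induction k with
  | zero => intro g a h; simpa [mul_comm] using
      Nat.mul_le_mul_left g.factorial (Nat.factorial_le h)
  | succ k IH =>
    intro g a h
    have h1 : a.factorial * (g + k).factorial ≤ g.factorial * (a + k).factorial := IH g a h
    calc a.factorial * (g + (k+1)).factorial
        = (g + k + 1) * (a.factorial * (g + k).factorial) := by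
          rw [show g + (k+1) = g + k + 1 by omega, Nat.factorial_succ]; ring
      _ ≤ (a + k + 1) * (g.factorial * (a + k).factorial) :=
          Nat.mul_le_mul (by omega) h1
      _ = g.factorial * (a + (k+1)).factorial := by
          rw [show a + (k+1) = a + k + 1 by omega, Nat.factorial_succ]; ring

theorem stmt19 (A : ℕ → ℝ) (hApos : ∀ p, 0 < A p) (hA0 : A 0 = 1) (hA1 : A 1 = 1)
    (hM4 : ∀ p : ℕ, 1 ≤ p →
      (A p / (Nat.factorial p)) ^ 2 ≤
        (A (p - 1) / (Nat.factorial (p - 1))) * (A (p + 1) / (Nat.factorial (p + 1)))) :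
    (∀ p : ℕ, 1 ≤ p → (p : ℝ) * A (p - 1) ≤ A p) ∧
      (∀ (d : ℕ) (α β γ δ : Fin (2 * d) → ℕ), β + γ + δ = α →
        ∀ l j : ℕ, 1 ≤ l → l ≤ j →
          1 ≤ (∑ i, β i) + (∑ i, γ i) + l → 1 ≤ (∑ i, δ i) + 2 * j - l →
          ((Nat.factorial (∑ i, α i) : ℝ) /
              ((Nat.factorial (∑ i, β i) : ℝ) * (Nat.factorial (∑ i, γ i) : ℝ) *
                (Nat.factorial (∑ i, δ i) : ℝ))) *
              A (∑ i, β i) * A ((∑ i, γ i) + l) * A ((∑ i, δ i) + 2 * j - l) ≤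
            (((∑ i, α i) + 2 * j : ℕ) : ℝ) * A ((∑ i, α i) + 2 * j - 1)) := by
  set N : ℕ → ℝ := fun p => A p / (Nat.factorial p : ℝ) with hNdef
  have hFpos : ∀ n : ℕ, (0:ℝ) < (Nat.factorial n : ℝ) := fun n => by
    exact_mod_cast Nat.factorial_pos n
  have hN : ∀ p, 0 < N p := fun p => div_pos (hApos p) (hFpos p)
  have hN0 : N 0 = 1 := by simp [hNdef, hA0]
  have hN1 : N 1 = 1 := by simp [hNdef, hA1]
  have hAN : ∀ x, A x = (Nat.factorial x : ℝ) * N x := by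
    intro x; simp only [hNdef]; field_simp
  have hstep : ∀ p : ℕ, N (p+1) * N (p+1) ≤ N p * N (p+2) := by
    intro p
    have := hM4 (p+1) (by omega)
    simpa [hNdef, sq] using this
  have hmono : ∀ q : ℕ, N q ≤ N (q+1) := by
    intro q
    have := aux_ratio_mono N hN hstep 0 q (Nat.zero_le q)
    rw [hN1, hN0, one_mul, one_mul] at this
    exact this
  constructor
  · intro p hp
    obtain ⟨q, rfl⟩ : ∃ q, p = q + 1 := ⟨p - 1, by omega⟩
    have h1 : N q ≤ N (q+1) := hmono q
    rw [hAN (q+1), hAN (q+1-1)]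
    have he : q + 1 - 1 = q := rfl
    rw [he, Nat.factorial_succ]
    push_cast
    have := mul_le_mul_of_nonneg_left h1 (by positivity :
      (0:ℝ) ≤ ((q:ℝ)+1) * (Nat.factorial q : ℝ))
    calc ((q:ℝ)+1) * ((Nat.factorial q : ℝ) * N q)
        = ((q:ℝ)+1) * (Nat.factorial q : ℝ) * N q := by ring
      _ ≤ ((q:ℝ)+1) * (Nat.factorial q : ℝ) * N (q+1) := this
      _ = ((q:ℝ)+1) * (Nat.factorial q : ℝ) * N (q+1) := rfl
  · intro d α β γ δ hsum l j hl hlj _ _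
    set b := ∑ i, β i with hb
    set g := ∑ i, γ i with hg
    set e := ∑ i, δ i with he
    set a := ∑ i, α i with ha
    have hae : a = b + g + e := by
      rw [ha, ← hsum]
      simp [Finset.sum_add_distrib, hb, hg, he]
    set m := a + 2 * j with hm
    have hm2 : 2 ≤ m := by omega
    have hk3 : e + 2 * j - l = e + (2 * j - l) := by omega
    set k2 := g + l with hk2def
    set k3 := e + (2 * j - l) with hk3def
    rw [hk3]
    -- factorial inequality in ℕ
    have hfact : a.factorial * k2.factorial * k3.factorial ≤
        m.factorial * g.factorial * e.factorial := by
      have h1 : a.factorial * (g + l).factorial ≤ g.factorial * (a + l).factorial :=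
        aux_factle l g a (by omega)
      have h2 : (a + l).factorial * (e + (2*j - l)).factorial ≤
          e.factorial * (a + l + (2*j - l)).factorial :=
        aux_factle (2*j - l) e (a + l) (by omega)
      have hml : a + l + (2*j - l) = m := by omega
      rw [hml] at h2
      calc a.factorial * k2.factorial * k3.factorial
          ≤ g.factorial * (a+l).factorial * k3.factorial :=
            Nat.mul_le_mul_right _ h1
        _ = g.factorial * ((a+l).factorial * k3.factorial) := by ring
        _ ≤ g.factorial * (e.factorial * m.factorial) :=
            Nat.mul_le_mul_left _ h2
        _ = m.factorial * g.factorial * e.factorial := by ring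
    have hfactR : (a.factorial : ℝ) * k2.factorial * k3.factorial ≤
        (m.factorial : ℝ) * g.factorial * e.factorial := by exact_mod_cast hfact
    -- N inequality
    have hNineq : N b * N k2 * N k3 ≤ N (m - 1) := by
      have h1 : N b * N k2 ≤ N 0 * N (b + k2) := aux_spread0' N hN hstep b k2
      rw [hN0, one_mul] at h1
      have h2 : N (b + k2) * N k3 ≤ N 1 * N (b + k2 + k3 - 1) :=
        aux_spread1' N hN hstep (b + k2) k3 (by omega) (by omega)
      rw [hN1, one_mul] at h2
      have hidx : b + k2 + k3 - 1 = m - 1 := by omega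
      rw [hidx] at h2
      calc N b * N k2 * N k3 ≤ N (b + k2) * N k3 :=
            mul_le_mul_of_nonneg_right h1 (hN k3).le
        _ ≤ N (m - 1) := h2
    -- assemble
    have hmfact : (m:ℝ) * (Nat.factorial (m-1) : ℝ) = (m.factorial : ℝ) := by
      have : m.factorial = m * (m-1).factorial := by
        conv_lhs => rw [show m = (m-1) + 1 by omega]
        rw [Nat.factorial_succ]
        congr 1
        omega
      rw [this]; push_cast; ring
    rw [hAN b, hAN k2, hAN (m-1)]
    rw [div_mul_eq_mul_div, div_mul_eq_mul_div, div_mul_eq_mul_div, div_le_iff₀ (by positivity)]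
    have key : ((a.factorial : ℝ) * k2.factorial * k3.factorial) * (N b * N k2 * N k3) ≤
        ((m.factorial : ℝ) * g.factorial * e.factorial) * N (m - 1) :=
      mul_le_mul hfactR hNineq (mul_nonneg (mul_nonneg (hN b).le (hN k2).le) (hN k3).le) (by positivity)
    calc (a.factorial : ℝ) * ((Nat.factorial b : ℝ) * N b) *
          ((Nat.factorial k2 : ℝ) * N k2) * A k3
        = (Nat.factorial b : ℝ) * (((a.factorial : ℝ) * k2.factorial * k3.factorial) *
            (N b * N k2 * N k3)) := by rw [hAN k3]; ring
      _ ≤ (Nat.factorial b : ℝ) * (((m.factorial : ℝ) * g.factorial * e.factorial) *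
            N (m - 1)) := by
          exact mul_le_mul_of_nonneg_left key (hFpos b).le
      _ = (m:ℝ) * ((Nat.factorial (m-1) : ℝ) * N (m-1)) *
            ((Nat.factorial b : ℝ) * (Nat.factorial g : ℝ) * (Nat.factorial e : ℝ)) := by
          rw [← hmfact]; ring
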